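/- The rank-one factored BFGS update yields a Cholesky-type factorization: if B = C C^T is symmetric positive definite, s^T y > 0, and one defines v = s/(s^T B s), u = sqrt((s^T B s)/(s^T y)) · y + B s, and C' = (I - u v^T) C, then C' (C')^T = B - (B s s^T B)/(s^T B s) + (y y^T)/(s^T y), which is the direct BFGS update of B. -/

import Mathlib

open Matrix

lemma vmv_mul {D : ℕ} (a b : Fin D → ℝ) (M : Matrix (Fin D) (Fin D) ℝ) :
    vecMulVec a b * M = vecMulVec a (vecMul b M) := by
  ext i j
  simp [mul_apply, vecMulVec_apply, vecMul, dotProduct, Finset.mul_sum, mul_assoc]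

lemma mul_vmv {D : ℕ} (a b : Fin D → ℝ) (M : Matrix (Fin D) (Fin D) ℝ) :
    M * vecMulVec a b = vecMulVec (M.mulVec a) b := by
  ext i j
  simp [mul_apply, vecMulVec_apply, mulVec, dotProduct, Finset.sum_mul, mul_assoc]

lemma vmv_vmv {D : ℕ} (a b c d : Fin D → ℝ) :
    vecMulVec a b * vecMulVec c d = (b ⬝ᵥ c) • vecMulVec a d := by
  ext i j
  simp [mul_apply, vecMulVec_apply, dotProduct, Finset.sum_mul, Finset.mul_sum]
  ring_nf
  apply Finset.sum_congr rfl
  intros; ring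

lemma vmv_mulVec {D : ℕ} (a b c : Fin D → ℝ) :
    vecMulVec a b *ᵥ c = (b ⬝ᵥ c) • a := by
  ext i
  simp [mulVec, vecMulVec_apply, dotProduct, Finset.mul_sum, Finset.sum_mul]
  ring_nf

lemma vmv_transpose {D : ℕ} (a b : Fin D → ℝ) :
    (vecMulVec a b)ᵀ = vecMulVec b a := by
  ext i j; simp [vecMulVec_apply, mul_comm]

/-- The rank-one factored BFGS update yields a Cholesky-type factorization of the
direct BFGS update of `B`. -/
theorem bfgs_factored_update (D : ℕ) (hD : 1 ≤ D)
    (B C : Matrix (Fin D) (Fin D) ℝ) (hB : B.PosDef) (hBC : B = C * Cᵀ)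
    (s y : Fin D → ℝ) (hsy : 0 < s ⬝ᵥ y)
    (v u : Fin D → ℝ) (C' : Matrix (Fin D) (Fin D) ℝ)
    (hv : v = (s ⬝ᵥ B.mulVec s)⁻¹ • s)
    (hu : u = Real.sqrt ((s ⬝ᵥ B.mulVec s) / (s ⬝ᵥ y)) • y + B.mulVec s)
    (hC' : C' = (1 - vecMulVec u v) * C) :
    C' * C'ᵀ = B - (s ⬝ᵥ B.mulVec s)⁻¹ • (vecMulVec (B.mulVec s) (B.mulVec s))
        + (s ⬝ᵥ y)⁻¹ • vecMulVec y y := by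
  have hs0 : s ≠ 0 := by
    rintro rfl; simp at hsy
  set α := s ⬝ᵥ B.mulVec s with hα
  set β := s ⬝ᵥ y with hβ
  set w := B.mulVec s with hw
  set t := Real.sqrt (α / β) with htdef
  have hαpos : 0 < α := by simpa [hα] using hB.dotProduct_mulVec_pos hs0
  have hα0 : α ≠ 0 := ne_of_gt hαpos
  have hβ0 : β ≠ 0 := ne_of_gt hsy
  have ht2 : t * t = α / β := Real.mul_self_sqrt (by positivity)
  have hBsym : Bᵀ = B := by simpa using hB.1.eq
  have hvw : vecMul s B = w := by rw [← hBsym, vecMul_transpose]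
  have hws : w ⬝ᵥ s = α := by
    rw [hα, dotProduct_comm]
  have key : C' * C'ᵀ = (1 - vecMulVec u v) * B * (1 - vecMulVec u v)ᵀ := by
    rw [hC', transpose_mul, hBC]
    noncomm_ring
  rw [key, transpose_sub, transpose_one, vmv_transpose]
  rw [hv, hu]
  -- expand
  simp only [sub_mul, mul_sub, one_mul, mul_one, vmv_mul, mul_vmv, vmv_vmv]
  have e1 : vecMul ((α:ℝ)⁻¹ • s) B = α⁻¹ • w := by
    rw [smul_vecMul, hvw]
  have e2 : B.mulVec ((α:ℝ)⁻¹ • s) = α⁻¹ • w := by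
    rw [mulVec_smul, ← hw]
  rw [e1, e2]
  ext i j
  simp only [Matrix.sub_apply, Matrix.add_apply, Matrix.smul_apply, vecMulVec_apply, smul_eq_mul,
    Pi.add_apply, Pi.smul_apply, dotProduct_smul, smul_dotProduct, vmv_mulVec,
    add_dotProduct, smul_add, Pi.smul_apply]
  have hws' : w ⬝ᵥ s = α := hws
  rw [hws']
  field_simp
  ring_nf
  have ht2' : t * t * β = α := by rw [ht2]; field_simp
  linear_combination y i * y j * ht2'
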